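/- Let z₁ > 0 > z₂, λ ∈ ℝ, a > 0, let h : [0,a] → ℝ be continuous and strictly positive with H(x) := ∫₀ˣ ds/h(s), let cˡ, cᵃ > 0 with cˡ ≠ cᵃ, c₁₀(x) := (1 − H(x)/H(a))cˡ + (H(x)/H(a))cᵃ, and T₀ := (z₁ − z₂)(cᵃ − cˡ)/(z₂H(a)). Let c₁₁ˡ, c₁₁^{a,l} ∈ ℝ, define M₀ := c₁₁ˡ − c₁₁^{a,l} + ((λz₁ − z₂)/z₂)·((cᵃ)² − (cˡ)²), T₁ := −((z₁ − z₂)/(z₂H(a)))·M₀, and c₁₁(x) := c₁₁ˡ + ((λz₁ − z₂)/z₂)·(c₁₀(x)² − (cˡ)²) − (H(x)/H(a))·M₀. Then c₁₁(0) = c₁₁ˡ, c₁₁(a) = c₁₁^{a,l}, and for all x ∈ (0,a): c₁₁'(x) = (2(λz₁ − z₂)T₀c₁₀(x) + z₂T₁)/((z₁ − z₂)h(x)). -/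

import Mathlib

/-- Concentration part of Lemma 2.3: the first-order regular layer `c₁₁` on
`[0,a]` has the prescribed endpoint values and satisfies the first-order slow
equation. -/
theorem first_order_regular_layer_concentration_on_0a
    (z₁ z₂ lam a : ℝ) (hz₁ : 0 < z₁) (hz₂ : z₂ < 0) (ha : 0 < a)
    (h : ℝ → ℝ) (hcont : ContinuousOn h (Set.Icc 0 a))
    (hpos : ∀ x ∈ Set.Icc 0 a, 0 < h x)
    (H : ℝ → ℝ) (hH : ∀ x, H x = ∫ s in (0 : ℝ)..x, 1 / h s)
    (cl ca : ℝ) (hcl : 0 < cl) (hca : 0 < ca) (hne : cl ≠ ca)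
    (c₁₀ : ℝ → ℝ)
    (hc₁₀ : ∀ x, c₁₀ x = (1 - H x / H a) * cl + (H x / H a) * ca)
    (T₀ : ℝ) (hT₀ : T₀ = (z₁ - z₂) * (ca - cl) / (z₂ * H a))
    (c₁₁l c₁₁al M₀ T₁ : ℝ) (c₁₁ : ℝ → ℝ)
    (hM₀ : M₀ = c₁₁l - c₁₁al + ((lam * z₁ - z₂) / z₂) * (ca ^ 2 - cl ^ 2))
    (hT₁ : T₁ = -((z₁ - z₂) / (z₂ * H a)) * M₀)
    (hc₁₁ : ∀ x, c₁₁ x = c₁₁l + ((lam * z₁ - z₂) / z₂) * ((c₁₀ x) ^ 2 - cl ^ 2)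
      - (H x / H a) * M₀) :
    c₁₁ 0 = c₁₁l ∧ c₁₁ a = c₁₁al ∧
    ∀ x ∈ Set.Ioo 0 a,
      HasDerivAt c₁₁
        ((2 * (lam * z₁ - z₂) * T₀ * c₁₀ x + z₂ * T₁) / ((z₁ - z₂) * h x)) x := by
  have hfcont : ContinuousOn (fun s => 1 / h s) (Set.Icc 0 a) := by
    exact ContinuousOn.div continuousOn_const hcont (fun x hx => (hpos x hx).ne')
  have hH0 : H 0 = 0 := by rw [hH]; simp
  have hHa : 0 < H a := by
    rw [hH]
    apply intervalIntegral.intervalIntegral_pos_of_pos_on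
    · exact (hfcont.mono (by rw [Set.uIcc_of_le ha.le])).intervalIntegrable
    · intro x hx
      exact one_div_pos.mpr (hpos x ⟨hx.1.le, hx.2.le⟩)
    · exact ha
  have hHane : H a ≠ 0 := hHa.ne'
  have hz₂ne : z₂ ≠ 0 := hz₂.ne
  have hz₁₂ : z₁ - z₂ ≠ 0 := by linarith
  have hc₁₀0 : c₁₀ 0 = cl := by rw [hc₁₀, hH0]; field_simp; ring
  have hc₁₀a : c₁₀ a = ca := by rw [hc₁₀]; field_simp; ring
  refine ⟨by rw [hc₁₁, hc₁₀0, hH0]; ring, ?_, ?_⟩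
  · rw [hc₁₁, hc₁₀a, div_self hHane, hM₀]; ring
  · intro x hx
    have hxIcc : Set.Icc 0 a ∈ nhds x := Icc_mem_nhds hx.1 hx.2
    have hhx : h x ≠ 0 := (hpos x ⟨hx.1.le, hx.2.le⟩).ne'
    have hHder : HasDerivAt H (1 / h x) x := by
      have hd : HasDerivAt (fun y => ∫ s in (0:ℝ)..y, 1 / h s) (1 / h x) x := by
        apply intervalIntegral.integral_hasDerivAt_right
        · exact (hfcont.mono (Set.uIcc_subset_Icc (Set.left_mem_Icc.mpr ha.le)
            ⟨hx.1.le, hx.2.le⟩)).intervalIntegrable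
        · exact (hfcont.mono Set.Ioo_subset_Icc_self).stronglyMeasurableAtFilter
            isOpen_Ioo x hx
        · exact hfcont.continuousAt hxIcc
      have hEq : H = fun y => ∫ s in (0:ℝ)..y, 1 / h s := funext hH
      rw [hEq]; exact hd
    have hc₁₀der : HasDerivAt c₁₀ ((ca - cl) / (H a * h x)) x := by
      have hEq : c₁₀ = fun y => (1 - H y / H a) * cl + (H y / H a) * ca :=
        funext hc₁₀
      rw [hEq]
      have hd := (((hHder.div_const (H a)).const_sub 1).mul_const cl).add
        ((hHder.div_const (H a)).mul_const ca)
      refine hd.congr_deriv ?_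
      field_simp
      ring
    have hc₁₁der : HasDerivAt c₁₁
        (((lam * z₁ - z₂) / z₂) * (2 * c₁₀ x * ((ca - cl) / (H a * h x)))
          - (1 / h x / H a) * M₀) x := by
      have hEq : c₁₁ = fun y => c₁₁l + ((lam * z₁ - z₂) / z₂) *
          ((c₁₀ y) ^ 2 - cl ^ 2) - (H y / H a) * M₀ := funext hc₁₁
      rw [hEq]
      have h1 : HasDerivAt (fun y => (c₁₀ y) ^ 2)
          (2 * c₁₀ x * ((ca - cl) / (H a * h x))) x := by
        have hd := hc₁₀der.pow 2
        refine hd.congr_deriv ?_; norm_num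
      exact (((h1.sub_const (cl ^ 2)).const_mul ((lam * z₁ - z₂) / z₂)).const_add
        c₁₁l).sub ((hHder.div_const (H a)).mul_const M₀)
    convert hc₁₁der using 1
    rw [hT₀, hT₁]
    field_simp
    ring
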